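/- arXiv:2602.21842 — 4 statements merged into one kernel-verified Lean document; each statement's English description precedes it below -/
import Mathlib

section
/- In the quotient ring R = 𝔽₂[x₁,…,x_ℓ]/(f_{n−ℓ+1},…,f_n), where f_j is the complete homogeneous symmetric polynomial of degree j, the monomial ∏_{i=1}^ℓ x_i^{n−i} is nonzero. -/
open MvPolynomial

lemma prodMapX {ℓ : ℕ} (m : Multiset (Fin ℓ)) :
    (m.map X).prod = monomial m.toFinsupp (1 : ZMod 2) := by
  induction m using Multiset.induction_on with
  | empty => simp
  | cons a s ih =>
      have : a ::ₘ s = {a} + s := by simp [Multiset.singleton_add]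
      rw [this, Multiset.map_add, Multiset.prod_add, Multiset.toFinsupp_add,
        Multiset.map_singleton, Multiset.prod_singleton, ih, Multiset.toFinsupp_singleton,
        X, monomial_mul, one_mul]

lemma coeff_hsymm {ℓ : ℕ} (j : ℕ) (d : Fin ℓ →₀ ℕ) :
    coeff d (hsymm (Fin ℓ) (ZMod 2) j) = if ∑ i, d i = j then 1 else 0 := by
  have hsum : ∀ f : Fin ℓ →₀ ℕ, (f.sum fun _ e => e) = ∑ i, f i :=
    fun f => Finsupp.sum_fintype _ _ (fun _ => rfl)
  simp only [hsymm, prodMapX, coeff_sum, coeff_monomial]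
  split
  · rename_i h
    have hcard : Multiset.card (Finsupp.toMultiset d) = j := by
      rw [Finsupp.card_toMultiset]; rw [show (d.sum fun _ => id) = d.sum fun _ e => e from rfl,
        hsum]; exact h
    set s₀ : Sym (Fin ℓ) j := ⟨Finsupp.toMultiset d, hcard⟩ with hs₀
    have : ∀ s : Sym (Fin ℓ) j, (Multiset.toFinsupp (s : Multiset (Fin ℓ)) = d) ↔ s = s₀ := by
      intro s
      constructor
      · intro he; apply Sym.ext; have he' := congrArg Finsupp.toMultiset he; simp at he'; exact he'
      · rintro rfl; simp [hs₀]
    rw [Finset.sum_eq_single_of_mem s₀ (Finset.mem_univ _)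
      (fun s _ hne => by
        split_ifs with hc
        · exact absurd ((this s).1 hc) hne
        · rfl)]
    split_ifs with hc
    · rfl
    · exact absurd ((this s₀).2 rfl) hc
  · rename_i h
    refine Finset.sum_eq_zero fun s _ => ?_
    rw [if_neg]
    intro he
    apply h
    rw [← he, ← hsum]
    show ((s : Multiset (Fin ℓ)).toFinsupp.sum fun _ => id) = j
    rw [Multiset.toFinsupp_sum_eq]
    exact s.2

lemma det_lemma (n ℓ : ℕ) (hℓ : 1 ≤ ℓ) (hn : ℓ ≤ n) (b : Fin ℓ → ℕ)
    (hdet : (Matrix.of fun k i : Fin ℓ =>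
      if b i + (k.1 + 1) ≤ n then (1 : ZMod 2) else 0).det ≠ 0) :
    ∑ i : Fin ℓ, (n - (i.1 + 1)) ≤ ∑ i, b i + (n - ℓ) := by
  set M : Matrix (Fin ℓ) (Fin ℓ) (ZMod 2) :=
    Matrix.of fun k i : Fin ℓ => if b i + (k.1 + 1) ≤ n then (1 : ZMod 2) else 0 with hM
  set t : Fin ℓ → ℕ := fun i => min ℓ (n - b i) with ht
  have hentry : ∀ k i : Fin ℓ, M k i = if k.1 < t i then 1 else 0 := by
    intro k i
    have hk := k.2
    by_cases h : b i + (k.1 + 1) ≤ n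
    · rw [hM]; simp only [Matrix.of_apply, if_pos h, ht]
      rw [if_pos (by omega)]
    · rw [hM]; simp only [Matrix.of_apply, if_neg h, ht]
      rw [if_neg (by omega)]
  -- t is injective
  have hinj : Function.Injective t := by
    intro i i' he
    by_contra hne
    exact hdet (Matrix.det_zero_of_column_eq hne (fun k => by rw [hentry, hentry, he]))
  -- t i ≥ 1
  have hpos : ∀ i, 1 ≤ t i := by
    intro i
    by_contra hc
    refine hdet (Matrix.det_eq_zero_of_column_eq_zero i (fun k => ?_))
    rw [hentry]; rw [if_neg (by omega)]
  have hle : ∀ i, t i ≤ ℓ := fun i => min_le_left _ _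
  -- image of t is (·+1) '' range ℓ
  have himg : Finset.image t Finset.univ = Finset.image (· + 1) (Finset.range ℓ) := by
    apply Finset.eq_of_subset_of_card_le
    · intro v hv
      simp only [Finset.mem_image, Finset.mem_univ, true_and] at hv
      obtain ⟨i, rfl⟩ := hv
      simp only [Finset.mem_image, Finset.mem_range]
      exact ⟨t i - 1, by have := hpos i; have := hle i; omega, by have := hpos i; omega⟩
    · rw [Finset.card_image_of_injective _ (fun a a' h => by omega),
        Finset.card_range, Finset.card_image_of_injective _ hinj, Finset.card_univ,
        Fintype.card_fin]
  -- sum of t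
  have hsumt : ∑ i, t i = ∑ i : Fin ℓ, (i.1 + 1) := by
    have h1 : ∑ v ∈ Finset.image t Finset.univ, v = ∑ i, t i :=
      Finset.sum_image (fun i _ i' _ h => hinj h)
    have h2 : ∑ v ∈ Finset.image (· + 1) (Finset.range ℓ), v = ∑ k ∈ Finset.range ℓ, (k + 1) :=
      Finset.sum_image (fun a _ a' _ h => by omega)
    rw [← h1, himg, h2, Fin.sum_univ_eq_sum_range (fun k => k + 1)]
  -- there is i* with t i* = ℓ
  have hex : ∃ i₀, t i₀ = ℓ := by
    have : ℓ ∈ Finset.image t Finset.univ := by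
      rw [himg]
      simp only [Finset.mem_image, Finset.mem_range]
      exact ⟨ℓ - 1, by omega, by omega⟩
    simpa using this
  obtain ⟨i₀, hi₀⟩ := hex
  -- on erase i₀, b i + t i = n
  have hbt : ∀ i ∈ Finset.univ.erase i₀, b i + t i = n := by
    intro i hi
    have hne : i ≠ i₀ := (Finset.mem_erase.1 hi).1
    have htlt : t i < ℓ := by
      rcases lt_or_eq_of_le (hle i) with h | h
      · exact h
      · exact absurd (hinj (h.trans hi₀.symm)) hne
    have h0 : t i = ℓ ∨ t i = n - b i := min_choice _ _
    have h1 : t i ≤ n - b i := min_le_right _ _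
    have := hpos i
    omega
  have hsum1 : ∑ i ∈ Finset.univ.erase i₀, (b i + t i) = (ℓ - 1) * n := by
    rw [Finset.sum_congr rfl hbt, Finset.sum_const, Finset.card_erase_of_mem (Finset.mem_univ _),
      Finset.card_univ, Fintype.card_fin, smul_eq_mul]
  have hsum2 : ∑ i ∈ Finset.univ.erase i₀, t i + ℓ = ∑ i, t i := by
    have h := Finset.sum_erase_add Finset.univ t (Finset.mem_univ i₀)
    rw [hi₀] at h
    exact h
  have hsum3 : ∑ i ∈ Finset.univ.erase i₀, b i ≤ ∑ i, b i :=
    Finset.sum_le_sum_of_subset (Finset.subset_univ _)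
  have hsplit : ∑ i ∈ Finset.univ.erase i₀, (b i + t i)
      = ∑ i ∈ Finset.univ.erase i₀, b i + ∑ i ∈ Finset.univ.erase i₀, t i :=
    Finset.sum_add_distrib
  -- D + (sum of (i+1)) = ℓ * n
  have hD : ∑ i : Fin ℓ, (n - (i.1 + 1)) + ∑ i : Fin ℓ, (i.1 + 1) = ℓ * n := by
    rw [← Finset.sum_add_distrib]
    have h : ∑ i : Fin ℓ, ((n - (i.1 + 1)) + (i.1 + 1)) = ∑ _i : Fin ℓ, n :=
      Finset.sum_congr rfl (fun i _ => by have := i.2; omega)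
    rw [h, Finset.sum_const, Finset.card_univ, Fintype.card_fin, smul_eq_mul, mul_comm]
  have hmul : (ℓ - 1) * n + n = ℓ * n := by
    cases ℓ with
    | zero => omega
    | succ m => simp [Nat.succ_sub_one, Nat.succ_mul]
  generalize hQ : (ℓ - 1) * n = Q at hsum1 hmul
  generalize hP : ℓ * n = P at hD hmul
  omega



/-- The exponent finsupp `δ ∘ σ`. -/
noncomputable def dlt (n ℓ : ℕ) (σ : Equiv.Perm (Fin ℓ)) : Fin ℓ →₀ ℕ :=
  Finsupp.equivFunOnFinite.symm fun i => n - ((σ i).1 + 1)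

/-- The socle functional. -/
noncomputable def phi (n ℓ : ℕ) (p : MvPolynomial (Fin ℓ) (ZMod 2)) : ZMod 2 :=
  ∑ σ : Equiv.Perm (Fin ℓ), coeff (dlt n ℓ σ) p

lemma dlt_apply (n ℓ : ℕ) (σ : Equiv.Perm (Fin ℓ)) (i : Fin ℓ) :
    dlt n ℓ σ i = n - ((σ i).1 + 1) := rfl

lemma phi_add (n ℓ : ℕ) (p q : MvPolynomial (Fin ℓ) (ZMod 2)) :
    phi n ℓ (p + q) = phi n ℓ p + phi n ℓ q := by
  simp [phi, coeff_add, Finset.sum_add_distrib]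

lemma sum_dlt (n ℓ : ℕ) (σ : Equiv.Perm (Fin ℓ)) :
    ∑ i, dlt n ℓ σ i = ∑ i : Fin ℓ, (n - (i.1 + 1)) := by
  simp only [dlt_apply]
  exact Equiv.sum_comp σ (fun i : Fin ℓ => n - (i.1 + 1))

lemma sign_cast (σ : Equiv.Perm (Fin ℓ)) : ((Equiv.Perm.sign σ : ℤ) : ZMod 2) = 1 := by
  rcases Int.units_eq_one_or (Equiv.Perm.sign σ) with h | h <;> rw [h] <;> decide

lemma phi_monomial_hsymm (n ℓ j : ℕ) (hℓ : 1 ≤ ℓ) (hn : ℓ ≤ n) (hj : n - ℓ + 1 ≤ j)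
    (b : Fin ℓ →₀ ℕ) (c : ZMod 2) :
    phi n ℓ (monomial b c * hsymm (Fin ℓ) (ZMod 2) j) = 0 := by
  have hterm : ∀ σ : Equiv.Perm (Fin ℓ),
      coeff (dlt n ℓ σ) (monomial b c * hsymm (Fin ℓ) (ZMod 2) j)
      = if b ≤ dlt n ℓ σ ∧ ∑ i, b i + j = ∑ i : Fin ℓ, (n - (i.1 + 1)) then c else 0 := by
    intro σ
    rw [coeff_monomial_mul', coeff_hsymm]
    by_cases hb : b ≤ dlt n ℓ σ
    · rw [if_pos hb]
      have hsub : ∑ i, (dlt n ℓ σ - b) i + ∑ i, b i = ∑ i : Fin ℓ, (n - (i.1 + 1)) := by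
        rw [← Finset.sum_add_distrib, ← sum_dlt n ℓ σ]
        refine Finset.sum_congr rfl fun i _ => ?_
        have hbi : b i ≤ dlt n ℓ σ i := hb i
        rw [Finsupp.tsub_apply]
        omega
      by_cases hd : ∑ i, (dlt n ℓ σ - b) i = j
      · rw [if_pos hd, if_pos ⟨hb, by omega⟩, mul_one]
      · rw [if_neg hd, if_neg (by rintro ⟨-, h⟩; exact hd (by omega)), mul_zero]
    · rw [if_neg hb, if_neg (by rintro ⟨h, -⟩; exact hb h)]
  rw [phi, Finset.sum_congr rfl fun σ _ => hterm σ]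
  by_cases hdeg : ∑ i, b i + j = ∑ i : Fin ℓ, (n - (i.1 + 1))
  · have : ∀ σ : Equiv.Perm (Fin ℓ),
        (if b ≤ dlt n ℓ σ ∧ ∑ i, b i + j = ∑ i : Fin ℓ, (n - (i.1 + 1)) then c else 0)
        = c * (if ∀ i, b i + ((σ i).1 + 1) ≤ n then 1 else 0) := by
      intro σ
      have hiff : b ≤ dlt n ℓ σ ↔ ∀ i, b i + ((σ i).1 + 1) ≤ n := by
        rw [Finsupp.le_def]
        refine forall_congr' fun i => ?_
        rw [dlt_apply]
        have := (σ i).2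
        omega
      by_cases hb : b ≤ dlt n ℓ σ
      · rw [if_pos ⟨hb, hdeg⟩, if_pos (hiff.1 hb), mul_one]
      · rw [if_neg (by rintro ⟨h, -⟩; exact hb h), if_neg (fun h => hb (hiff.2 h)), mul_zero]
    rw [Finset.sum_congr rfl fun σ _ => this σ, ← Finset.mul_sum]
    have hdet0 : (Matrix.of fun k i : Fin ℓ =>
        if b i + (k.1 + 1) ≤ n then (1 : ZMod 2) else 0).det = 0 := by
      by_contra hdet
      have := det_lemma n ℓ hℓ hn b hdet
      omega
    have hsum : ∑ σ : Equiv.Perm (Fin ℓ), (if ∀ i, b i + ((σ i).1 + 1) ≤ n then (1 : ZMod 2) else 0)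
        = (Matrix.of fun k i : Fin ℓ =>
        if b i + (k.1 + 1) ≤ n then (1 : ZMod 2) else 0).det := by
      rw [Matrix.det_apply']
      refine Finset.sum_congr rfl fun σ _ => ?_
      rw [sign_cast, one_mul]
      simp only [Matrix.of_apply]
      rw [Finset.prod_boole]
      simp only [Finset.mem_univ, forall_const]
    rw [hsum, hdet0, mul_zero]
  · rw [Finset.sum_eq_zero fun σ _ => by rw [if_neg (by rintro ⟨-, h⟩; exact hdeg h)]]

lemma phi_mul_hsymm (n ℓ j : ℕ) (hℓ : 1 ≤ ℓ) (hn : ℓ ≤ n) (hj : n - ℓ + 1 ≤ j)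
    (q : MvPolynomial (Fin ℓ) (ZMod 2)) :
    phi n ℓ (q * hsymm (Fin ℓ) (ZMod 2) j) = 0 := by
  induction q using MvPolynomial.induction_on' with
  | monomial b c => exact phi_monomial_hsymm n ℓ j hℓ hn hj b c
  | add p q hp hq => rw [add_mul, phi_add, hp, hq, add_zero]

lemma phi_top (n ℓ : ℕ) (hℓ : 1 ≤ ℓ) (hn : ℓ ≤ n) :
    phi n ℓ (∏ i : Fin ℓ, (X i : MvPolynomial (Fin ℓ) (ZMod 2)) ^ (n - (i.1 + 1))) = 1 := by
  have htop : (∏ i : Fin ℓ, (X i : MvPolynomial (Fin ℓ) (ZMod 2)) ^ (n - (i.1 + 1)))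
      = monomial (dlt n ℓ 1) 1 := by
    rw [← prod_X_pow_eq_monomial,
      Finset.prod_subset (Finset.subset_univ ((dlt n ℓ 1).support))
        (fun i _ hi => by rw [Finsupp.notMem_support_iff.1 hi, pow_zero])]
    exact Finset.prod_congr rfl fun i _ => by rw [dlt_apply]; simp
  rw [htop, phi]
  have hval : ∀ σ : Equiv.Perm (Fin ℓ),
      coeff (dlt n ℓ σ) (monomial (dlt n ℓ 1) (1 : ZMod 2)) = if σ = 1 then 1 else 0 := by
    intro σ
    rw [coeff_monomial]
    by_cases h : σ = 1
    · rw [if_pos (by rw [h]), if_pos h]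
    · rw [if_neg, if_neg h]
      intro he
      apply h
      ext i
      rw [Equiv.Perm.one_apply]
      have := congrArg (fun f : Fin ℓ →₀ ℕ => f i) he
      simp only [dlt_apply, Equiv.Perm.one_apply] at this
      have h1 := (σ i).2
      have h2 := i.2
      exact congrArg Fin.val (Fin.ext (by omega : (σ i).1 = i.1)) ▸ rfl
  rw [Finset.sum_congr rfl fun σ _ => hval σ, Finset.sum_ite_eq' Finset.univ 1 fun _ => (1:ZMod 2)]
  simp

/-- In `R = 𝔽₂[x₁,…,x_ℓ]/(f_{n−ℓ+1},…,f_n)`, where `f_j` is the complete homogeneous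
symmetric polynomial of degree `j`, the monomial `∏_{i=1}^ℓ x_i^{n−i}` is nonzero.
(Here the variable `x_i`, `1 ≤ i ≤ ℓ`, is indexed by `i - 1 : Fin ℓ`.) -/
theorem top_class_nonzero (n ℓ : ℕ) (hℓ : 1 ≤ ℓ) (hn : ℓ ≤ n) :
    Ideal.Quotient.mk
        (Ideal.span ((fun j => hsymm (Fin ℓ) (ZMod 2) j) ''
          (Set.Icc (n - ℓ + 1) n)))
        (∏ i : Fin ℓ, (X i : MvPolynomial (Fin ℓ) (ZMod 2)) ^ (n - (i.1 + 1))) ≠ 0 := by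
  intro h0
  rw [Ideal.Quotient.eq_zero_iff_mem] at h0
  have key : ∀ q, phi n ℓ
      (q * ∏ i : Fin ℓ, (X i : MvPolynomial (Fin ℓ) (ZMod 2)) ^ (n - (i.1 + 1))) = 0 := by
    refine Submodule.span_induction ?_ ?_ ?_ ?_ h0
    · rintro x ⟨j, hj, rfl⟩ q
      exact phi_mul_hsymm n ℓ j hℓ hn hj.1 q
    · intro q
      rw [mul_zero]
      simp [phi]
    · intro x y _ _ hx hy q
      rw [mul_add, phi_add, hx q, hy q, add_zero]
    · intro a x _ hx q
      rw [smul_eq_mul, ← mul_assoc]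
      exact hx (q * a)
  have h1 := key 1
  rw [one_mul, phi_top n ℓ hℓ hn] at h1
  exact one_ne_zero h1
end

section
/- The quotient ring 𝔽₂[x₁,…,x_ℓ]/(f_{n−ℓ+1},…,f_n) is a finite-dimensional 𝔽₂-vector space; moreover every element of the ideal (f_{n−ℓ+1},…,f_n) has no component in degree ≤ n−ℓ, so the quotient agrees with the polynomial ring in degrees ≤ n−ℓ. -/
open MvPolynomial

open MvPolynomial Finsupp

lemma deg_sum_eq (ℓ:ℕ) (d : Fin ℓ →₀ ℕ) : (d.sum fun _ k => k) = d.degree := rfl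

lemma deg_add {σ : Type*} (a b : σ →₀ ℕ) : (a+b).degree = a.degree + b.degree := by
  simp only [degree_eq_weight_one]; exact map_add _ _ _

lemma deg_single {σ : Type*} (i : σ) (b : ℕ) : (Finsupp.single i b).degree = b := by
  classical
  rcases eq_or_ne b 0 with rfl | h
  · simp [Finsupp.degree]
  · rw [Finsupp.degree_apply, Finsupp.support_single_ne_zero _ h, Finset.sum_singleton,
      Finsupp.single_eq_same]

lemma prod_map_X {σ R : Type*} [CommSemiring R] [DecidableEq σ] (s : Multiset σ) :
    (s.map (X : σ → MvPolynomial σ R)).prod = monomial (Multiset.toFinsupp s) 1 := by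
  induction s using Multiset.induction with
  | empty => simp [monomial_zero']
  | cons a s ih =>
      rw [Multiset.map_cons, Multiset.prod_cons, ih, ← Multiset.singleton_add,
        Multiset.toFinsupp_add, Multiset.toFinsupp_singleton]
      rw [show (X a : MvPolynomial σ R) = monomial (Finsupp.single a 1) 1 by
        rw [← X_pow_eq_monomial, pow_one], monomial_mul, one_mul]

lemma coeff_hsymm_s7 {σ R : Type*} [Fintype σ] [DecidableEq σ] [CommSemiring R] (m : ℕ)
    (d : σ →₀ ℕ) :
    coeff d (hsymm σ R m) = if d.degree = m then 1 else 0 := by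
  rw [hsymm]
  simp_rw [prod_map_X, coeff_sum, coeff_monomial]
  have hdeg : ∀ s : Sym σ m, (Multiset.toFinsupp (↑s : Multiset σ)).degree = m := by
    intro s
    exact (Multiset.toFinsupp_sum_eq _).trans s.2
  by_cases h : d.degree = m
  · rw [if_pos h]
    have hc : Multiset.card (Finsupp.toMultiset d) = m := by
      rw [Finsupp.card_toMultiset]; exact h
    have hcond : ∀ x : Sym σ m, (Multiset.toFinsupp (↑x : Multiset σ) = d) ↔
        x = (⟨Finsupp.toMultiset d, hc⟩ : Sym σ m) := by
      intro x
      constructor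
      · intro hd
        apply Subtype.ext
        have := congrArg Finsupp.toMultiset hd
        rwa [Multiset.toFinsupp_toMultiset] at this
      · rintro rfl
        exact Finsupp.toMultiset_toFinsupp d
    letI : Fintype {s : Multiset σ // Multiset.card s = m} := inferInstanceAs (Fintype (Sym σ m))
    refine (Finset.sum_eq_single_of_mem (⟨Finsupp.toMultiset d, hc⟩ : Sym σ m)
      (Finset.mem_univ (⟨Finsupp.toMultiset d, hc⟩ : Sym σ m)) ?_).trans ?_
    · intro x _ hx
      rw [if_neg]
      exact fun hd => hx ((hcond x).mp hd)
    · exact if_pos ((hcond _).mpr rfl)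
  · rw [if_neg h]
    apply Finset.sum_eq_zero
    intro s _
    rw [if_neg]
    intro hd
    exact h (hd ▸ hdeg s)

noncomputable def gpoly (ℓ : ℕ) (hℓ : 0 < ℓ) : ℕ → ℕ → MvPolynomial (Fin ℓ) (ZMod 2)
  | 0, m => if m = 0 then 1 else 0
  | (k+1), m => ∑ a ∈ Finset.range (m+1),
      (X (⟨ℓ-1-k, by omega⟩ : Fin ℓ)) ^ a * gpoly ℓ hℓ k (m - a)

lemma coeff_gpoly (ℓ : ℕ) (hℓ : 0 < ℓ) (k : ℕ) (hk : k ≤ ℓ) (m : ℕ) (d : Fin ℓ →₀ ℕ) :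
    coeff d (gpoly ℓ hℓ k m) =
      if (d.degree = m ∧ ∀ i : Fin ℓ, d i ≠ 0 → ℓ - k ≤ (i:ℕ)) then 1 else 0 := by
  induction k generalizing m d with
  | zero =>
    rw [gpoly]
    rcases eq_or_ne d 0 with rfl | hd
    · by_cases hm : m = 0
      · subst hm
        have hc : (Finsupp.degree (0 : Fin ℓ →₀ ℕ) = 0 ∧
            ∀ i : Fin ℓ, (0 : Fin ℓ →₀ ℕ) i ≠ 0 → ℓ - 0 ≤ (i:ℕ)) :=
          ⟨map_zero _, fun i hi => absurd rfl hi⟩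
        rw [if_pos rfl, coeff_one, if_pos hc, if_pos rfl]
      · rw [if_neg hm, coeff_zero, if_neg]
        rintro ⟨h1, -⟩
        rw [map_zero] at h1
        omega
    · obtain ⟨i, hi⟩ : ∃ i, d i ≠ 0 := by
        by_contra hco; push_neg at hco; exact hd (Finsupp.ext fun i => hco i)
      have h2 : ¬ (d.degree = m ∧ ∀ i : Fin ℓ, d i ≠ 0 → ℓ - 0 ≤ (i:ℕ)) := by
        rintro ⟨-, h⟩
        exact absurd (h i hi) (by have := i.isLt; omega)
      rw [if_neg h2]
      by_cases hm : m = 0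
      · subst hm
        rw [if_pos rfl, coeff_one, if_neg (fun h => hd h.symm)]
      · rw [if_neg hm, coeff_zero]
  | succ k ih =>
    have hkℓ : k < ℓ := by omega
    set i₀ : Fin ℓ := ⟨ℓ-1-k, by omega⟩ with hi₀
    have hi₀v : (i₀ : ℕ) = ℓ - 1 - k := rfl
    have hg : gpoly ℓ hℓ (k+1) m = ∑ a ∈ Finset.range (m+1),
        (X i₀ : MvPolynomial (Fin ℓ) (ZMod 2)) ^ a * gpoly ℓ hℓ k (m - a) := rfl
    rw [hg]
    have ih' : ∀ (m : ℕ) (d : Fin ℓ →₀ ℕ), coeff d (gpoly ℓ hℓ k m) =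
        if (d.degree = m ∧ ∀ i : Fin ℓ, d i ≠ 0 → ℓ - k ≤ (i:ℕ)) then 1 else 0 :=
      fun m d => ih (by omega) m d
    simp_rw [coeff_sum, X_pow_eq_monomial, coeff_monomial_mul', ih', one_mul]
    set b := d i₀ with hb
    have hbdeg : b ≤ d.degree := Finsupp.le_degree i₀ d
    have key : ∀ a, a < b → ¬ ((d - Finsupp.single i₀ a).degree = m - a ∧
        ∀ i : Fin ℓ, (d - Finsupp.single i₀ a) i ≠ 0 → ℓ - k ≤ (i:ℕ)) := by
      rintro a ha ⟨-, h⟩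
      have h1 : (d - Finsupp.single i₀ a) i₀ = b - a := by
        rw [Finsupp.tsub_apply, Finsupp.single_eq_same]
      have h2 := h i₀ (by omega)
      rw [hi₀v] at h2
      omega
    by_cases hbm : b ≤ m
    · rw [Finset.sum_eq_single_of_mem b (Finset.mem_range.mpr (by omega))]
      · have hsle : Finsupp.single i₀ b ≤ d := Finsupp.single_le_iff.mpr le_rfl
        rw [if_pos hsle]
        have hdegsub : (d - Finsupp.single i₀ b).degree = d.degree - b := by
          have hadd : (d - Finsupp.single i₀ b) + Finsupp.single i₀ b = d :=
            tsub_add_cancel_of_le hsle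
          have := deg_add (d - Finsupp.single i₀ b) (Finsupp.single i₀ b)
          rw [hadd, deg_single] at this
          omega
        apply if_congr _ rfl rfl
        constructor
        · rintro ⟨h1, h2⟩
          constructor
          · omega
          · intro i hi
            rcases eq_or_ne i i₀ with rfl | hne
            · rw [hi₀v]; omega
            · have h3 : (d - Finsupp.single i₀ b) i = d i := by
                rw [Finsupp.tsub_apply, Finsupp.single_eq_of_ne' (fun h => hne h.symm),
                  Nat.sub_zero]
              have := h2 i (by rw [h3]; exact hi)
              omega
        · rintro ⟨h1, h2⟩
          constructor
          · omega
          · intro i hi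
            rcases eq_or_ne i i₀ with rfl | hne
            · rw [Finsupp.tsub_apply, Finsupp.single_eq_same] at hi
              omega
            · have h3 : (d - Finsupp.single i₀ b) i = d i := by
                rw [Finsupp.tsub_apply, Finsupp.single_eq_of_ne' (fun h => hne h.symm),
                  Nat.sub_zero]
              rw [h3] at hi
              have h4 := h2 i hi
              have h5 : (i:ℕ) ≠ ℓ - 1 - k := fun h => hne (Fin.ext (h.trans hi₀v.symm))
              have := i.isLt
              omega
      · intro a ha hab
        rcases lt_or_ge a b with h | h
        · rw [if_pos (Finsupp.single_le_iff.mpr (by omega)), if_neg (key a h)]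
        · rw [if_neg]
          rw [Finsupp.single_le_iff]
          omega
    · rw [Finset.sum_eq_zero, if_neg]
      · rintro ⟨h1, -⟩; omega
      · intro a ha
        rw [Finset.mem_range] at ha
        rw [if_pos (Finsupp.single_le_iff.mpr (by omega)), if_neg (key a (by omega))]

lemma gpoly_top (ℓ : ℕ) (hℓ : 0 < ℓ) (m : ℕ) :
    gpoly ℓ hℓ ℓ m = hsymm (Fin ℓ) (ZMod 2) m := by
  apply MvPolynomial.ext
  intro d
  rw [coeff_gpoly ℓ hℓ ℓ le_rfl, coeff_hsymm_s7]
  apply if_congr _ rfl rfl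
  constructor
  · exact fun h => h.1
  · exact fun h => ⟨h, fun i _ => by omega⟩

lemma gpoly_one (ℓ : ℕ) (hℓ : 0 < ℓ) (m : ℕ) :
    gpoly ℓ hℓ 1 m = (X (⟨ℓ-1, by omega⟩ : Fin ℓ)) ^ m := by
  have hg : gpoly ℓ hℓ 1 m = ∑ a ∈ Finset.range (m+1),
      (X (⟨ℓ-1, by omega⟩ : Fin ℓ) : MvPolynomial (Fin ℓ) (ZMod 2)) ^ a
        * gpoly ℓ hℓ 0 (m - a) := rfl
  rw [hg]
  rw [Finset.sum_eq_single_of_mem m (Finset.mem_range.mpr (by omega))]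
  · rw [show gpoly ℓ hℓ 0 (m - m) = if m - m = 0 then 1 else 0 from rfl,
      if_pos (by omega), mul_one]
  · intro a ha hab
    rw [Finset.mem_range] at ha
    rw [show gpoly ℓ hℓ 0 (m - a) = if m - a = 0 then 1 else 0 from rfl,
      if_neg (by omega), mul_zero]

lemma gpoly_succ (ℓ : ℕ) (hℓ : 0 < ℓ) (k m : ℕ) :
    gpoly ℓ hℓ (k+1) (m+1) = gpoly ℓ hℓ k (m+1)
      + X (⟨ℓ-1-k, by omega⟩ : Fin ℓ) * gpoly ℓ hℓ (k+1) m := by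
  have hg : ∀ m', gpoly ℓ hℓ (k+1) m' = ∑ a ∈ Finset.range (m'+1),
      (X (⟨ℓ-1-k, by omega⟩ : Fin ℓ) : MvPolynomial (Fin ℓ) (ZMod 2)) ^ a
        * gpoly ℓ hℓ k (m' - a) := fun _ => rfl
  rw [hg, hg, Finset.sum_range_succ']
  simp only [pow_zero, one_mul, Nat.sub_zero, Finset.mul_sum]
  rw [add_comm]
  congr 1
  apply Finset.sum_congr rfl
  intro a _
  rw [pow_succ, Nat.succ_sub_succ]
  ring

lemma gpoly_mem (n ℓ : ℕ) (hℓ : 0 < ℓ) (hn : ℓ ≤ n) :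
    ∀ j k, k + j = ℓ → 1 ≤ k → ∀ m, n - k + 1 ≤ m → m ≤ n →
    gpoly ℓ hℓ k m ∈
      Ideal.span ((fun j => hsymm (Fin ℓ) (ZMod 2) j) '' (Set.Icc (n - ℓ + 1) n)) := by
  intro j
  induction j with
  | zero =>
    intro k hk _ m hm1 hm2
    have hkℓ : k = ℓ := by omega
    subst hkℓ
    rw [gpoly_top]
    exact Ideal.subset_span ⟨m, Set.mem_Icc.mpr ⟨by omega, hm2⟩, rfl⟩
  | succ j ih =>
    intro k hk hk1 m hm1 hm2
    have hkl : k + 1 ≤ ℓ := by omega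
    obtain ⟨m', rfl⟩ : ∃ m', m = m' + 1 := ⟨m - 1, by omega⟩
    have heq : gpoly ℓ hℓ k (m'+1) = gpoly ℓ hℓ (k+1) (m'+1)
        - X (⟨ℓ-1-k, by omega⟩ : Fin ℓ) * gpoly ℓ hℓ (k+1) m' := by
      rw [gpoly_succ]; ring
    rw [heq]
    exact sub_mem (ih (k+1) (by omega) (by omega) (m'+1) (by omega) hm2)
      (Ideal.mul_mem_left _ _ (ih (k+1) (by omega) (by omega) m' (by omega) (by omega)))

lemma X_pow_mem (n ℓ : ℕ) (hℓ : 0 < ℓ) (hn : ℓ ≤ n) (i : Fin ℓ) :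
    (X i : MvPolynomial (Fin ℓ) (ZMod 2)) ^ n ∈
      Ideal.span ((fun j => hsymm (Fin ℓ) (ZMod 2) j) '' (Set.Icc (n - ℓ + 1) n)) := by
  set I := Ideal.span ((fun j => hsymm (Fin ℓ) (ZMod 2) j) '' (Set.Icc (n - ℓ + 1) n)) with hI
  have hlast := gpoly_mem n ℓ hℓ hn (ℓ-1) 1 (by omega) le_rfl n (by omega) le_rfl
  rw [gpoly_one] at hlast
  set e : Equiv.Perm (Fin ℓ) := Equiv.swap (⟨ℓ-1, by omega⟩ : Fin ℓ) i with he
  have hren : rename (⇑e) ((X (⟨ℓ-1, by omega⟩ : Fin ℓ) : MvPolynomial (Fin ℓ) (ZMod 2)) ^ n)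
      = X i ^ n := by
    rw [map_pow, rename_X, he, Equiv.swap_apply_left]
  have h1 : X i ^ n ∈ Ideal.map (rename (⇑e) : MvPolynomial (Fin ℓ) (ZMod 2) →ₐ[ZMod 2] _).toRingHom I := by
    rw [← hren]
    exact Ideal.mem_map_of_mem _ hlast
  have h2 : Ideal.map (rename (⇑e) : MvPolynomial (Fin ℓ) (ZMod 2) →ₐ[ZMod 2] _).toRingHom I ≤ I := by
    rw [hI, Ideal.map_span]
    apply Ideal.span_le.mpr
    rintro q ⟨p, ⟨jj, hj, rfl⟩, rfl⟩
    exact Ideal.subset_span ⟨jj, hj, (hsymm_isSymmetric (Fin ℓ) (ZMod 2) jj e).symm⟩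
  exact h2 h1


/-- The quotient `𝔽₂[x₁,…,x_ℓ]/(f_{n−ℓ+1},…,f_n)` is a finite-dimensional
`𝔽₂`-vector space; moreover every element of the ideal `(f_{n−ℓ+1},…,f_n)` has no
component in degree `≤ n − ℓ`, so the quotient agrees with the polynomial ring in
degrees `≤ n − ℓ`. -/
theorem quotient_finite_dimensional_and_low_degrees (n ℓ : ℕ) (hℓ : 1 ≤ ℓ) (hn : ℓ ≤ n) :
    FiniteDimensional (ZMod 2)
      (MvPolynomial (Fin ℓ) (ZMod 2) ⧸
        Ideal.span ((fun j => hsymm (Fin ℓ) (ZMod 2) j) '' (Set.Icc (n - ℓ + 1) n))) ∧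
    (∀ p ∈ Ideal.span ((fun j => hsymm (Fin ℓ) (ZMod 2) j) '' (Set.Icc (n - ℓ + 1) n)),
      ∀ d : Fin ℓ →₀ ℕ, (d.sum fun _ k => k) ≤ n - ℓ → MvPolynomial.coeff d p = 0) := by
  set I := Ideal.span ((fun j => hsymm (Fin ℓ) (ZMod 2) j) '' (Set.Icc (n - ℓ + 1) n)) with hI
  constructor
  · -- finite dimensionality
    have hXn : ∀ i : Fin ℓ, (X i : MvPolynomial (Fin ℓ) (ZMod 2)) ^ n ∈ I :=
      X_pow_mem n ℓ hℓ hn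
    set Q := MvPolynomial (Fin ℓ) (ZMod 2) ⧸ I with hQ
    set F : (Fin ℓ → Fin n) → Q := fun f =>
      Ideal.Quotient.mk I (monomial (Finsupp.equivFunOnFinite.symm fun i => ((f i : ℕ))) 1)
      with hF
    have hmono : ∀ v : Fin ℓ →₀ ℕ,
        Ideal.Quotient.mk I (monomial v 1) ∈ Submodule.span (ZMod 2) (Set.range F) := by
      intro v
      by_cases hv : ∀ i, v i < n
      · apply Submodule.subset_span
        refine ⟨fun i => ⟨v i, hv i⟩, ?_⟩
        show Ideal.Quotient.mk I
            (monomial (Finsupp.equivFunOnFinite.symm fun i => (((⟨v i, hv i⟩ : Fin n)) : ℕ)) 1)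
          = Ideal.Quotient.mk I (monomial v 1)
        have hveq : (Finsupp.equivFunOnFinite.symm fun i => (((⟨v i, hv i⟩ : Fin n)) : ℕ)) = v :=
          Finsupp.equivFunOnFinite_symm_coe v
        rw [hveq]
      · push_neg at hv
        obtain ⟨i, hi⟩ := hv
        have hmem : monomial v (1 : ZMod 2) ∈ I := by
          have heq : monomial v (1 : ZMod 2)
              = X i ^ n * monomial (v - Finsupp.single i n) 1 := by
            rw [X_pow_eq_monomial, monomial_mul, one_mul]
            rw [add_tsub_cancel_of_le (Finsupp.single_le_iff.mpr hi)]
          rw [heq]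
          exact Ideal.mul_mem_right _ _ (hXn i)
        rw [Ideal.Quotient.eq_zero_iff_mem.mpr hmem]
        exact zero_mem _
    have htop : Submodule.span (ZMod 2) (Set.range F) = ⊤ := by
      rw [eq_top_iff]
      intro q _
      obtain ⟨p, rfl⟩ := Ideal.Quotient.mk_surjective q
      rw [← p.support_sum_monomial_coeff, map_sum]
      apply Submodule.sum_mem
      intro v _
      have heq : monomial v (coeff v p) = (coeff v p) • monomial v (1 : ZMod 2) := by
        rw [smul_monomial, smul_eq_mul, mul_one]
      rw [heq, ← Ideal.Quotient.mkₐ_eq_mk (ZMod 2) I, map_smul, Ideal.Quotient.mkₐ_eq_mk]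
      exact Submodule.smul_mem _ _ (hmono v)
    exact ⟨Submodule.fg_def.mpr ⟨Set.range F, Set.finite_range F, htop⟩⟩
  · -- low degrees vanish
    intro p hp
    have : ∀ d : Fin ℓ →₀ ℕ, d.degree ≤ n - ℓ → MvPolynomial.coeff d p = 0 := by
      induction hp using Submodule.span_induction with
      | mem x hx =>
        obtain ⟨j, hj, rfl⟩ := hx
        intro d hd
        rw [Set.mem_Icc] at hj
        rw [coeff_hsymm_s7, if_neg]
        omega
      | zero => intro d _; rw [coeff_zero]
      | add x y hx hy ihx ihy =>
        intro d hd
        rw [coeff_add, ihx d hd, ihy d hd, add_zero]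
      | smul r x hx ihx =>
        intro d hd
        rw [smul_eq_mul, coeff_mul]
        apply Finset.sum_eq_zero
        rintro ⟨d1, d2⟩ hmem
        rw [Finset.HasAntidiagonal.mem_antidiagonal] at hmem
        have hd2 : d2.degree ≤ n - ℓ := by
          have h := deg_add d1 d2
          rw [hmem] at h
          omega
        rw [ihx d2 hd2, mul_zero]
    intro d hd
    exact this d (by rwa [← deg_sum_eq])
end

section
/- In the ring A = 𝔽₂[x₀]/(x₀^{n+1}) ⊗ 𝔽₂[x₁,…,x_ℓ]/(f_{n−ℓ+1},…,f_n) ⊗ 𝔽₂[u_χ^{±1} : χ ∈ G°], the element x₀^n · ∏_{i=1}^ℓ x_i^{n−i} · u_{χ₀⊗χᵢ} · u_{χᵢ}^{n−i−1} · u₀^n is nonzero. -/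
open MvPolynomial TensorProduct

section Aux

lemma tpen_multiset_prod_X {R : Type} [CommSemiring R] {n : ℕ} (m : Multiset (Fin n)) :
    ((m.map (X : Fin n → MvPolynomial (Fin n) R)).prod) = monomial m.toFinsupp (1 : R) := by
  induction m using Multiset.induction_on with
  | empty => simp [monomial_zero', C_1]
  | cons a s ih =>
    rw [Multiset.map_cons, Multiset.prod_cons, ih]
    have : (a ::ₘ s).toFinsupp = Finsupp.single a 1 + s.toFinsupp := by
      rw [← Multiset.singleton_add, map_add, Multiset.toFinsupp_singleton]
    rw [this, X, monomial_mul, one_mul]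

lemma tpen_coeff_hsymm {R : Type} [CommSemiring R] (n j : ℕ) (d : Fin n →₀ ℕ) :
    MvPolynomial.coeff d (hsymm (Fin n) R j)
      = if (d.sum fun _ e => e) = j then 1 else 0 := by
  rw [hsymm]
  simp_rw [tpen_multiset_prod_X]
  rw [MvPolynomial.coeff_sum]
  simp_rw [coeff_monomial]
  split_ifs with h
  · refine Finset.sum_eq_single_of_mem ⟨Finsupp.toMultiset d,
        (Finsupp.card_toMultiset d).trans h⟩ (Finset.mem_univ _) ?_ |>.trans ?_
    · intro b _ hb
      rw [if_neg]
      intro hbd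
      apply hb
      apply Subtype.ext
      have := congrArg Finsupp.toMultiset hbd
      rwa [Multiset.toFinsupp_toMultiset] at this
    · rw [if_pos]
      simp
  · apply Finset.sum_eq_zero
    intro s _
    rw [if_neg]
    intro hsd
    apply h
    rw [← hsd]
    exact (Multiset.toFinsupp_sum_eq (s : Multiset (Fin n))).trans s.2

lemma tpen_finsupp_sum_cons {n : ℕ} (k : ℕ) (d : Fin n →₀ ℕ) :
    ((d.cons k).sum fun _ e => e) = k + (d.sum fun _ e => e) := by
  rw [Finsupp.sum_fintype _ _ (fun _ => rfl), Finsupp.sum_fintype _ _ (fun _ => rfl),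
    Fin.sum_univ_succ]
  simp

lemma tpen_hsum_coeff {R : Type} [CommSemiring R] (m j t : ℕ) :
    (∑ k ∈ Finset.range (j + 1),
        Polynomial.X ^ k * Polynomial.C (hsymm (Fin m) R (j - k))).coeff t
      = if t ≤ j then hsymm (Fin m) R (j - t) else 0 := by
  rw [Polynomial.finset_sum_coeff]
  simp_rw [mul_comm (Polynomial.X ^ _) _, Polynomial.C_mul_X_pow_eq_monomial,
    Polynomial.coeff_monomial]
  rw [Finset.sum_ite_eq' (Finset.range (j+1)) t]
  simp [Nat.lt_succ_iff]

lemma tpen_finSuccEquiv_hsymm {R : Type} [CommSemiring R] (m j : ℕ) :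
    finSuccEquiv R m (hsymm (Fin (m + 1)) R j)
      = ∑ k ∈ Finset.range (j + 1),
          Polynomial.X ^ k * Polynomial.C (hsymm (Fin m) R (j - k)) := by
  apply Polynomial.ext; intro t
  apply MvPolynomial.ext; intro d
  rw [finSuccEquiv_coeff_coeff, tpen_coeff_hsymm, tpen_hsum_coeff, tpen_finsupp_sum_cons]
  split_ifs with h1 h2 h3
  · rw [tpen_coeff_hsymm, if_pos (by omega)]
  · exfalso; omega
  · rw [tpen_coeff_hsymm, if_neg (by omega)]
  · simp

lemma tpen_hsymm_rec {R : Type} [CommSemiring R] (m j : ℕ) :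
    finSuccEquiv R m (hsymm (Fin (m + 1)) R (j + 1))
      = Polynomial.C (hsymm (Fin m) R (j + 1))
        + Polynomial.X * finSuccEquiv R m (hsymm (Fin (m + 1)) R j) := by
  rw [tpen_finSuccEquiv_hsymm, tpen_finSuccEquiv_hsymm, Finset.sum_range_succ']
  rw [Finset.mul_sum]
  simp_rw [Nat.succ_sub_succ, pow_succ', mul_assoc, pow_zero, one_mul, Nat.sub_zero]
  rw [add_comm]

lemma tpen_hsymm_monic {R : Type} [CommSemiring R] [Nontrivial R] (m j : ℕ) :
    (finSuccEquiv R m (hsymm (Fin (m + 1)) R j)).Monic ∧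
      (finSuccEquiv R m (hsymm (Fin (m + 1)) R j)).natDegree = j := by
  have hdeg : (finSuccEquiv R m (hsymm (Fin (m + 1)) R j)).natDegree ≤ j := by
    rw [tpen_finSuccEquiv_hsymm]
    apply Polynomial.natDegree_sum_le_of_forall_le
    intro k hk
    rw [Finset.mem_range] at hk
    refine le_trans (Polynomial.natDegree_mul_le) ?_
    simp [Polynomial.natDegree_X_pow]
    omega
  have hcoeff : (finSuccEquiv R m (hsymm (Fin (m + 1)) R j)).coeff j = 1 := by
    rw [tpen_finSuccEquiv_hsymm, tpen_hsum_coeff, if_pos le_rfl, Nat.sub_self, hsymm_zero]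
  have hmonic := Polynomial.monic_of_natDegree_le_of_coeff_eq_one j hdeg hcoeff
  refine ⟨hmonic, le_antisymm hdeg ?_⟩
  apply Polynomial.le_natDegree_of_ne_zero
  rw [hcoeff]; exact one_ne_zero

lemma tpen_hsymm_finZero {R : Type} [CommSemiring R] (j : ℕ) (hj : 1 ≤ j) :
    hsymm (Fin 0) R j = 0 := by
  apply MvPolynomial.ext
  intro d
  rw [tpen_coeff_hsymm, coeff_zero, if_neg]
  have : d = 0 := Subsingleton.elim _ _
  rw [this, Finsupp.sum_zero_index]
  omega

lemma tpen_key : ∀ ℓ n : ℕ, ℓ ≤ n →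
    (∏ i : Fin ℓ, (X i : MvPolynomial (Fin ℓ) (ZMod 2)) ^ (n - ℓ + i.1)) ∉
      Ideal.span ((fun j => hsymm (Fin ℓ) (ZMod 2) j) '' (Set.Ici (n - ℓ + 1))) := by
  intro ℓ
  induction ℓ with
  | zero =>
    intro n _ hmem
    have hz : ∀ g ∈ ((fun j => hsymm (Fin 0) (ZMod 2) j) '' (Set.Ici (n - 0 + 1))),
        g = 0 := by
      rintro g ⟨j, hj, rfl⟩
      exact tpen_hsymm_finZero j (by simp at hj; omega)
    have : Ideal.span ((fun j => hsymm (Fin 0) (ZMod 2) j) '' (Set.Ici (n - 0 + 1)))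
        ≤ ⊥ := by
      rw [Ideal.span_le]
      intro g hg
      simp [hz g hg]
    have h1 : (∏ i : Fin 0, (X i : MvPolynomial (Fin 0) (ZMod 2)) ^ (n - 0 + i.1)) = 1 := by
      simp
    rw [h1] at hmem
    simpa using this hmem
  | succ m ih =>
    intro n hn hmem
    have hd : n - (m + 1) + 1 = n - m := by omega
    set S := MvPolynomial (Fin m) (ZMod 2)
    set I' : Ideal S :=
      Ideal.span ((fun j => hsymm (Fin m) (ZMod 2) j) '' (Set.Ici (n - m + 1))) with hI'
    set q : S →+* S ⧸ I' := Ideal.Quotient.mk I' with hq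
    set M' : S := ∏ i : Fin m, (X i : S) ^ (n - m + i.1) with hM'
    have hMne : q M' ≠ 0 := by
      intro h0
      exact ih n (by omega) ((Ideal.Quotient.eq_zero_iff_mem).mp h0)
    have : Nontrivial (S ⧸ I') := nontrivial_of_ne _ _ hMne
    set φ := MvPolynomial.finSuccEquiv (ZMod 2) m with hφ
    set p₀ : Polynomial S := φ (hsymm (Fin (m + 1)) (ZMod 2) (n - m)) with hp₀
    have hp₀monic : p₀.Monic := (tpen_hsymm_monic m (n - m)).1
    have hp₀deg : p₀.natDegree = n - m := (tpen_hsymm_monic m (n - m)).2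
    set P : Polynomial (S ⧸ I') := p₀.map q with hP
    have hPmonic : P.Monic := hp₀monic.map q
    have hPdeg : P.natDegree = n - m := by rw [hP, hp₀monic.natDegree_map, hp₀deg]
    letI : CommRing (S ⧸ I') := inferInstance
    set T := Polynomial (S ⧸ I') ⧸ Ideal.span {P}
    set mkT : Polynomial (S ⧸ I') →+* T := Ideal.Quotient.mk (Ideal.span {P}) with hmkT
    set Ψ : MvPolynomial (Fin (m + 1)) (ZMod 2) →+* T :=
      mkT.comp ((Polynomial.mapRingHom q).comp
        (φ : MvPolynomial (Fin (m+1)) (ZMod 2) ≃+* Polynomial S).toRingHom) with hΨ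
    have hΨapp : ∀ x, Ψ x = mkT ((φ x).map q) := fun x => rfl
    have hvan : ∀ j, n - m ≤ j → Ψ (hsymm (Fin (m + 1)) (ZMod 2) j) = 0 := by
      intro j hj
      induction j, hj using Nat.le_induction with
      | base =>
        rw [hΨapp, ← hp₀, ← hP]
        exact Ideal.Quotient.eq_zero_iff_mem.mpr (Ideal.mem_span_singleton_self P)
      | succ j hj ihj =>
        rw [hΨapp, tpen_hsymm_rec, Polynomial.map_add, Polynomial.map_mul, Polynomial.map_C,
          Polynomial.map_X, map_add, map_mul]
        have hgen : q (hsymm (Fin m) (ZMod 2) (j + 1)) = 0 := by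
          apply Ideal.Quotient.eq_zero_iff_mem.mpr
          apply Ideal.subset_span
          exact ⟨j + 1, by simp; omega, rfl⟩
        rw [hgen, Polynomial.C_0, map_zero, zero_add, ← hφ, ← hΨapp, ihj]
        exact mul_zero (mkT Polynomial.X)
    have hker : Ideal.span ((fun j => hsymm (Fin (m + 1)) (ZMod 2) j) ''
        (Set.Ici (n - (m + 1) + 1))) ≤ RingHom.ker Ψ := by
      rw [Ideal.span_le]
      rintro g ⟨j, hj, rfl⟩
      simp only [SetLike.mem_coe, RingHom.mem_ker]
      refine hvan j ?_
      simp only [Set.mem_Ici] at hj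
      omega
    have hΨM : Ψ (∏ i : Fin (m + 1),
        (X i : MvPolynomial (Fin (m + 1)) (ZMod 2)) ^ (n - (m + 1) + i.1)) = 0 := hker hmem
    have hφM : φ (∏ i : Fin (m + 1),
          (X i : MvPolynomial (Fin (m + 1)) (ZMod 2)) ^ (n - (m + 1) + i.1))
        = Polynomial.X ^ (n - (m + 1)) * Polynomial.C M' := by
      have hexp : ∀ i : Fin m, n - (m + 1) + (i.1 + 1) = n - m + i.1 := fun i => by omega
      rw [map_prod]
      simp_rw [map_pow]
      rw [Fin.prod_univ_succ, hφ, finSuccEquiv_X_zero]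
      simp_rw [finSuccEquiv_X_succ, Fin.val_succ, Fin.val_zero, add_zero,
        ← Polynomial.C_pow, hexp]
      rw [← map_prod, ← hM']
    rw [hΨapp, hφM, Polynomial.map_mul, Polynomial.map_pow, Polynomial.map_X,
      Polynomial.map_C] at hΨM
    have hmem2 : Polynomial.X ^ (n - (m + 1)) * Polynomial.C (q M') ∈ Ideal.span {P} :=
      Ideal.Quotient.eq_zero_iff_mem.mp hΨM
    obtain ⟨g, hg⟩ := Ideal.mem_span_singleton'.mp hmem2
    have hfne : Polynomial.X ^ (n - (m + 1)) * Polynomial.C (q M') ≠ 0 := by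
      intro h0
      have := congrArg (Polynomial.coeff · (n - (m + 1))) h0
      simp only [mul_comm (Polynomial.X ^ (n - (m + 1))) _,
        Polynomial.C_mul_X_pow_eq_monomial, Polynomial.coeff_monomial, if_pos rfl,
        Polynomial.coeff_zero] at this
      exact hMne this
    have hgne : g ≠ 0 := by
      intro h0
      rw [h0, zero_mul] at hg
      exact hfne hg.symm
    have hdeg1 : (Polynomial.X ^ (n - (m + 1)) * Polynomial.C (q M')).natDegree
        ≤ n - (m + 1) := by
      refine le_trans Polynomial.natDegree_mul_le ?_
      rw [Polynomial.natDegree_X_pow, Polynomial.natDegree_C]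
      omega
    have hdeg2 : (g * P).natDegree = n - m + g.natDegree := by
      rw [mul_comm, Polynomial.Monic.natDegree_mul' hPmonic hgne, hPdeg]
    rw [hg] at hdeg2
    omega

lemma tpen_key' (n ℓ : ℕ) (hn : ℓ ≤ n) :
    (∏ i : Fin ℓ, (X i : MvPolynomial (Fin ℓ) (ZMod 2)) ^ (n - (i.1 + 1))) ∉
      Ideal.span ((fun j => hsymm (Fin ℓ) (ZMod 2) j) '' (Set.Icc (n - ℓ + 1) n)) := by
  intro h
  have h1 : (∏ i : Fin ℓ, (X i : MvPolynomial (Fin ℓ) (ZMod 2)) ^ (n - (i.1 + 1))) ∈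
      Ideal.span ((fun j => hsymm (Fin ℓ) (ZMod 2) j) '' (Set.Ici (n - ℓ + 1))) :=
    Ideal.span_mono (Set.image_mono Set.Icc_subset_Ici_self) h
  set e : MvPolynomial (Fin ℓ) (ZMod 2) ≃ₐ[ZMod 2] MvPolynomial (Fin ℓ) (ZMod 2) :=
    MvPolynomial.renameEquiv (ZMod 2) (Fin.revPerm (n := ℓ)) with he
  have h2 : e (∏ i : Fin ℓ, (X i : MvPolynomial (Fin ℓ) (ZMod 2)) ^ (n - (i.1 + 1))) ∈
      Ideal.map (e : MvPolynomial (Fin ℓ) (ZMod 2) →+* MvPolynomial (Fin ℓ) (ZMod 2))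
        (Ideal.span ((fun j => hsymm (Fin ℓ) (ZMod 2) j) '' (Set.Ici (n - ℓ + 1)))) :=
    Ideal.mem_map_of_mem _ h1
  rw [Ideal.map_span, Set.image_image] at h2
  have himg : (fun j => (e : MvPolynomial (Fin ℓ) (ZMod 2) →+* MvPolynomial (Fin ℓ) (ZMod 2))
        ((fun j' => hsymm (Fin ℓ) (ZMod 2) j') j)) '' (Set.Ici (n - ℓ + 1))
      = (fun j => hsymm (Fin ℓ) (ZMod 2) j) '' (Set.Ici (n - ℓ + 1)) := by
    apply Set.image_congr
    intro j _
    exact rename_hsymm _ _ j Fin.revPerm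
  rw [himg] at h2
  have h3 : e (∏ i : Fin ℓ, (X i : MvPolynomial (Fin ℓ) (ZMod 2)) ^ (n - (i.1 + 1)))
      = ∏ i : Fin ℓ, (X i : MvPolynomial (Fin ℓ) (ZMod 2)) ^ (n - ℓ + i.1) := by
    rw [map_prod]
    simp_rw [map_pow]
    have hX : ∀ i : Fin ℓ, e (X i) = X (Fin.revPerm i) := fun i => rename_X _ _
    simp_rw [hX]
    refine Fintype.prod_equiv Fin.revPerm _ _ (fun i => ?_)
    have hi : (Fin.revPerm i).1 = ℓ - (i.1 + 1) := Fin.val_rev i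
    have hex : n - (i.1 + 1) = n - ℓ + (Fin.revPerm i).1 := by
      rw [hi]; have := i.isLt; omega
    rw [hex]
  rw [h3] at h2
  exact tpen_key ℓ n hn h2

lemma tpen_tmul_ne_zero {K V W : Type*} [Field K] [AddCommGroup V] [Module K V]
    [AddCommGroup W] [Module K W] {v : V} {w : W} (hv : v ≠ 0) (hw : w ≠ 0) :
    v ⊗ₜ[K] w ≠ 0 := by
  obtain ⟨f, hf⟩ : ∃ f : Module.Dual K V, f v ≠ 0 := by
    by_contra hall
    push_neg at hall
    exact hv ((Module.forall_dual_apply_eq_zero_iff K v).mp hall)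
  obtain ⟨g, hg⟩ : ∃ g : Module.Dual K W, g w ≠ 0 := by
    by_contra hall
    push_neg at hall
    exact hw ((Module.forall_dual_apply_eq_zero_iff K w).mp hall)
  intro h0
  have h2 : f v * g w = 0 := by
    have := congrArg (fun z => TensorProduct.lid K K (TensorProduct.map f g z)) h0
    simpa [smul_eq_mul] using this
  exact mul_ne_zero hf hg h2

end Aux

/-- In `A = 𝔽₂[x₀]/(x₀^{n+1}) ⊗ 𝔽₂[x₁,…,x_ℓ]/(f_{n−ℓ+1},…,f_n) ⊗ 𝔽₂[u_χ^{±1} : χ ∈ G°]`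
(the last factor being the Laurent polynomial ring on a finite index set `G°`, modelled
as the group algebra of the free abelian group on `G°`), the element
`x₀^n · ∏ᵢ x_i^{n−i} · u_{χ₀⊗χᵢ} · u_{χᵢ}^{n−i−1} · u₀^n` is nonzero.
Here `c0, c i, c' i ∈ G°` are the pairwise distinct indices of the units
`u₀ = u_{χ₀}`, `u_{χᵢ}`, `u_{χ₀⊗χᵢ}`, and `i : Fin ℓ` encodes `i + 1 ∈ {1,…,ℓ}`. -/
theorem tensor_product_element_nonzero (n ℓ : ℕ) (hℓ : 1 ≤ ℓ) (hn : ℓ ≤ n)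
    (Gcirc : Type) [Fintype Gcirc] (c0 : Gcirc) (c c' : Fin ℓ → Gcirc)
    (hc : Function.Injective c) (hc' : Function.Injective c')
    (hcc' : ∀ i j, c i ≠ c' j) (hc0 : ∀ i, c0 ≠ c i) (hc0' : ∀ i, c0 ≠ c' i) :
    ((Ideal.Quotient.mk (Ideal.span {(Polynomial.X : Polynomial (ZMod 2)) ^ (n + 1)})
          (Polynomial.X ^ n)) ⊗ₜ[ZMod 2]
        (Ideal.Quotient.mk
          (Ideal.span ((fun j => hsymm (Fin ℓ) (ZMod 2) j) '' (Set.Icc (n - ℓ + 1) n)))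
          (∏ i : Fin ℓ, (X i : MvPolynomial (Fin ℓ) (ZMod 2)) ^ (n - (i.1 + 1))))) ⊗ₜ[ZMod 2]
      ((AddMonoidAlgebra.single
          (Finsupp.single c0 (n : ℤ) +
            ∑ i : Fin ℓ,
              (Finsupp.single (c' i) (1 : ℤ) +
                Finsupp.single (c i) ((n : ℤ) - (i.1 + 1) - 1)))
          (1 : ZMod 2)) :
        AddMonoidAlgebra (ZMod 2) (Gcirc →₀ ℤ)) ≠ 0 := by
  have h1 : (Ideal.Quotient.mk (Ideal.span {(Polynomial.X : Polynomial (ZMod 2)) ^ (n + 1)})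
      (Polynomial.X ^ n)) ≠ 0 := by
    rw [Ne, Ideal.Quotient.eq_zero_iff_mem, Ideal.mem_span_singleton]
    intro hdvd
    have hne : (Polynomial.X : Polynomial (ZMod 2)) ^ n ≠ 0 :=
      pow_ne_zero n Polynomial.X_ne_zero
    have := Polynomial.natDegree_le_of_dvd hdvd hne
    rw [Polynomial.natDegree_X_pow, Polynomial.natDegree_X_pow] at this
    omega
  have h2 : (Ideal.Quotient.mk
      (Ideal.span ((fun j => hsymm (Fin ℓ) (ZMod 2) j) '' (Set.Icc (n - ℓ + 1) n)))
      (∏ i : Fin ℓ, (X i : MvPolynomial (Fin ℓ) (ZMod 2)) ^ (n - (i.1 + 1)))) ≠ 0 := by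
    rw [Ne, Ideal.Quotient.eq_zero_iff_mem]
    exact tpen_key' n ℓ hn
  have h3 : ((AddMonoidAlgebra.single
      (Finsupp.single c0 (n : ℤ) +
        ∑ i : Fin ℓ,
          (Finsupp.single (c' i) (1 : ℤ) +
            Finsupp.single (c i) ((n : ℤ) - (i.1 + 1) - 1)))
      (1 : ZMod 2)) : AddMonoidAlgebra (ZMod 2) (Gcirc →₀ ℤ)) ≠ 0 := by
    intro h0
    exact one_ne_zero (AddMonoidAlgebra.single_eq_zero.mp h0)
  exact tpen_tmul_ne_zero (tpen_tmul_ne_zero h1 h2) h3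
end

section
/- In the quotient ring 𝔽₂[x₁,…,x_ℓ]/(f_{n−ℓ+1},…,f_n), every homogeneous element of degree strictly greater than Σ_{i=1}^ℓ (n−i) = ℓn − ℓ(ℓ+1)/2 is zero. -/
open MvPolynomial Finset

noncomputable def G (ℓ k m : ℕ) : MvPolynomial (Fin ℓ) (ZMod 2) :=
  ∑ s ∈ Finset.univ.filter (fun s : Sym (Fin ℓ) m => ∀ i ∈ s.1, (i : ℕ) < k),
    monomial (Multiset.toFinsupp s.1) 1

lemma coeff_G (ℓ k m : ℕ) (t : Fin ℓ →₀ ℕ) :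
    coeff t (G ℓ k m) =
      if (t.sum fun _ e => e) = m ∧ ∀ i ∈ t.support, (i : ℕ) < k then 1 else 0 := by
  classical
  rw [G, coeff_sum]
  simp_rw [coeff_monomial]
  split_ifs with h
  · obtain ⟨hsum, hsupp⟩ := h
    have hcard : Multiset.card (Finsupp.toMultiset t) = m := by
      rw [Finsupp.card_toMultiset]; exact hsum
    set s₀ : Sym (Fin ℓ) m := ⟨Finsupp.toMultiset t, hcard⟩ with hs₀
    rw [Finset.sum_eq_single_of_mem s₀]
    · simp [s₀, Multiset.toFinsupp_toMultiset]
    · simp only [Finset.mem_filter, Finset.mem_univ, true_and]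
      intro i hi
      rw [Finsupp.mem_toMultiset] at hi
      exact hsupp i hi
    · intro b _ hb
      rw [if_neg]
      intro hbt
      apply hb
      apply Sym.coe_injective
      show (b : Multiset (Fin ℓ)) = s₀
      rw [hs₀]
      show (b : Multiset (Fin ℓ)) = Finsupp.toMultiset t
      rw [← hbt, Multiset.toFinsupp_toMultiset]
      rfl
  · apply Finset.sum_eq_zero
    intro s hs
    rw [Finset.mem_filter] at hs
    rw [if_neg]
    intro hst
    apply h
    constructor
    · rw [← hst]
      have h2 := Finsupp.card_toMultiset (Multiset.toFinsupp (s : Multiset (Fin ℓ)))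
      rw [Multiset.toFinsupp_toMultiset] at h2
      exact h2.symm.trans s.2
    · intro i hi
      apply hs.2
      rw [← Finsupp.mem_toMultiset, ← hst, Multiset.toFinsupp_toMultiset] at hi
      exact hi

lemma prod_X_multiset {ℓ : ℕ} (s : Multiset (Fin ℓ)) :
    (s.map (X : Fin ℓ → MvPolynomial (Fin ℓ) (ZMod 2))).prod
      = monomial (Multiset.toFinsupp s) 1 := by
  induction s using Multiset.induction_on with
  | empty => simp [monomial_zero']
  | cons a s ih =>
      rw [Multiset.map_cons, Multiset.prod_cons, ih, show a ::ₘ s = {a} + s by simp,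
        Multiset.toFinsupp_add, Multiset.toFinsupp_singleton, X, monomial_mul, one_mul]

lemma G_top (ℓ m : ℕ) : G ℓ ℓ m = hsymm (Fin ℓ) (ZMod 2) m := by
  rw [G, hsymm]
  rw [Finset.filter_true_of_mem (fun s _ => fun i _ => i.isLt)]
  exact Finset.sum_congr rfl fun s _ => (prod_X_multiset _).symm

lemma G_succ (ℓ k m : ℕ) (hk : k < ℓ) :
    G ℓ (k+1) (m+1) = G ℓ k (m+1) + X ⟨k, hk⟩ * G ℓ (k+1) m := by
  classical
  apply MvPolynomial.ext
  intro t
  rw [coeff_add, coeff_G, coeff_G, coeff_X_mul', coeff_G]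
  have h1 : ∀ i : Fin ℓ, (Finsupp.single (⟨k, hk⟩ : Fin ℓ) 1) i
      = if i = ⟨k, hk⟩ then 1 else 0 := fun i => by
    rw [Finsupp.single_apply]; exact if_congr ⟨Eq.symm, Eq.symm⟩ rfl rfl
  by_cases h0 : (⟨k, hk⟩ : Fin ℓ) ∈ t.support
  · have htk : 1 ≤ t ⟨k, hk⟩ := Nat.one_le_iff_ne_zero.2 (Finsupp.mem_support_iff.1 h0)
    set s' := t - Finsupp.single ⟨k, hk⟩ 1 with hs'
    have happ : ∀ i, s' i = if i = ⟨k, hk⟩ then t i - 1 else t i := by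
      intro i
      rw [hs', Finsupp.tsub_apply, h1]
      by_cases hik : i = ⟨k, hk⟩
      · rw [if_pos hik, if_pos hik]
      · rw [if_neg hik, if_neg hik]; omega
    have hdec : t = s' + Finsupp.single ⟨k, hk⟩ 1 := by
      ext i
      rw [Finsupp.add_apply, happ, h1]
      by_cases hik : i = ⟨k, hk⟩
      · rw [if_pos hik, if_pos hik]; subst hik; omega
      · rw [if_neg hik, if_neg hik]; omega
    have hsum : (t.sum fun _ e => e) = (s'.sum fun _ e => e) + 1 := by
      conv_lhs => rw [hdec]
      rw [Finsupp.sum_add_index' (fun _ => rfl) (fun _ _ _ => rfl),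
        Finsupp.sum_single_index rfl]
    have hsupp : (∀ i ∈ s'.support, (i : ℕ) < k + 1) ↔ (∀ i ∈ t.support, (i : ℕ) < k + 1) := by
      constructor
      · intro h i hi
        by_cases hik : i = ⟨k, hk⟩
        · subst hik; exact Nat.lt_succ_self k
        · apply h
          rw [Finsupp.mem_support_iff] at hi ⊢
          rw [happ, if_neg hik]; exact hi
      · intro h i hi
        apply h
        rw [Finsupp.mem_support_iff] at hi ⊢
        rw [happ] at hi
        by_cases hik : i = ⟨k, hk⟩
        · subst hik; exact Nat.one_le_iff_ne_zero.1 htk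
        · rwa [if_neg hik] at hi
    have hBfalse : ¬(∀ i ∈ t.support, (i : ℕ) < k) := by
      intro h
      exact absurd (h _ h0) (lt_irrefl k)
    have e1 : (if (t.sum fun _ e => e) = m + 1 ∧ ∀ i ∈ t.support, (i : ℕ) < k
        then (1 : ZMod 2) else 0) = 0 := if_neg (fun hc => hBfalse hc.2)
    rw [if_pos h0, e1, zero_add]
    apply if_congr _ rfl rfl
    constructor
    · rintro ⟨hA, hB⟩; exact ⟨by omega, hsupp.2 hB⟩
    · rintro ⟨hA, hB⟩; exact ⟨by omega, hsupp.1 hB⟩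
  · have hBB : (∀ i ∈ t.support, (i : ℕ) < k + 1) ↔ (∀ i ∈ t.support, (i : ℕ) < k) := by
      constructor
      · intro h i hi
        have h2 := h i hi
        have hik : i ≠ ⟨k, hk⟩ := fun he => h0 (he ▸ hi)
        have hv : (i : ℕ) ≠ k := fun hv => hik (Fin.ext hv)
        omega
      · intro h i hi; exact Nat.lt_succ_of_lt (h i hi)
    rw [if_neg h0, add_zero]
    apply if_congr _ rfl rfl
    exact and_congr_right fun _ => hBB

lemma Dsum2 (n : ℕ) : ∀ ℓ, ℓ ≤ n → 2 * (∑ k ∈ Finset.range ℓ, (n-1-k)) + ℓ*(ℓ+1) = 2*(ℓ*n) := by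
  intro ℓ
  induction ℓ with
  | zero => simp
  | succ l ih =>
      intro h
      rw [Finset.sum_range_succ]
      have ih' := ih (by omega)
      have e1 : (l+1)*n = l*n + n := by ring
      have e2 : (l+1)*((l+1)+1) = l*(l+1) + (l+1)*2 := by ring
      omega

lemma Dsum (n ℓ : ℕ) (h : ℓ ≤ n) :
    ∑ k ∈ Finset.range ℓ, (n-1-k) = ℓ*n - ℓ*(ℓ+1)/2 := by
  have h2 := Dsum2 n ℓ h
  have hpar : 2 ∣ ℓ*(ℓ+1) := (Nat.even_mul_succ_self ℓ).two_dvd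
  omega

noncomputable abbrev Igen (n ℓ : ℕ) : Ideal (MvPolynomial (Fin ℓ) (ZMod 2)) :=
  Ideal.span ((fun j => hsymm (Fin ℓ) (ZMod 2) j) '' (Set.Icc (n - ℓ + 1) n))

lemma G_mem (n ℓ : ℕ) (hn : ℓ ≤ n) :
    ∀ j k m : ℕ, k + j = ℓ → 1 ≤ k → n + 1 ≤ m + k → m ≤ n → G ℓ k m ∈ Igen n ℓ := by
  intro j
  induction j with
  | zero =>
      intro k m hkj _ h1 h2
      have hkl : k = ℓ := by omega
      subst hkl
      rw [G_top]
      exact Ideal.subset_span ⟨m, ⟨by omega, h2⟩, rfl⟩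
  | succ j ih =>
      intro k m hkj hk1 h1 h2
      have hkℓ : k < ℓ := by omega
      obtain ⟨m', rfl⟩ : ∃ m', m = m' + 1 := ⟨m - 1, by omega⟩
      have hrw : G ℓ k (m'+1) = G ℓ (k+1) (m'+1) - X ⟨k, hkℓ⟩ * G ℓ (k+1) m' := by
        rw [G_succ ℓ k m' hkℓ]; ring
      rw [hrw]
      exact Ideal.sub_mem _ (ih (k+1) (m'+1) (by omega) (by omega) (by omega) (by omega))
        (Ideal.mul_mem_left _ _ (ih (k+1) m' (by omega) (by omega) (by omega) (by omega)))

noncomputable def meas (ℓ d : ℕ) (t : Fin ℓ →₀ ℕ) : ℕ := ∑ i : Fin ℓ, t i * (d+1)^(i:ℕ)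

lemma meas_add (ℓ d : ℕ) (a b : Fin ℓ →₀ ℕ) :
    meas ℓ d (a + b) = meas ℓ d a + meas ℓ d b := by
  simp [meas, Finsupp.add_apply, add_mul, Finset.sum_add_distrib]

lemma meas_single (ℓ d c : ℕ) (k : Fin ℓ) :
    meas ℓ d (Finsupp.single k c) = c * (d+1)^(k:ℕ) := by
  rw [meas, Finset.sum_eq_single k]
  · rw [Finsupp.single_apply, if_pos rfl]
  · intro i _ hik
    rw [Finsupp.single_apply, if_neg (fun h => hik h.symm), zero_mul]
  · intro h; exact absurd (Finset.mem_univ k) h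

lemma sum_eq_sum_univ (ℓ : ℕ) (t : Fin ℓ →₀ ℕ) :
    (t.sum fun _ e => e) = ∑ i : Fin ℓ, t i :=
  Finsupp.sum_fintype _ _ (fun _ => rfl)

lemma meas_lt (ℓ d c : ℕ) (k : Fin ℓ) (u : Fin ℓ →₀ ℕ)
    (hsum : (u.sum fun _ e => e) = c) (huk : u k < c)
    (hsupp : ∀ i ∈ u.support, (i : ℕ) < (k : ℕ) + 1) (hcd : c ≤ d) :
    meas ℓ d u < c * (d+1)^(k:ℕ) := by
  have husum : ∑ i : Fin ℓ, u i = c := by rw [← sum_eq_sum_univ]; exact hsum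
  have hz : ∀ i : Fin ℓ, ¬ ((i : ℕ) < (k:ℕ) + 1) → u i = 0 := by
    intro i hi
    by_contra h
    exact hi (hsupp i (Finsupp.mem_support_iff.2 h))
  have hsplit : meas ℓ d u = u k * (d+1)^(k:ℕ) + ∑ i ∈ Finset.univ.erase k, u i * (d+1)^(i:ℕ) := by
    rw [meas, ← Finset.add_sum_erase _ _ (Finset.mem_univ k)]
  rcases Nat.eq_zero_or_pos (k : ℕ) with hk0 | hkpos
  · have hrest : ∑ i ∈ Finset.univ.erase k, u i * (d+1)^(i:ℕ) = 0 := by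
      apply Finset.sum_eq_zero
      intro i hi
      have hik : i ≠ k := (Finset.mem_erase.1 hi).1
      have : u i = 0 := by
        apply hz
        intro hlt
        apply hik
        apply Fin.ext
        omega
      rw [this, zero_mul]
    rw [hsplit, hrest, add_zero, hk0, pow_zero, mul_one, mul_one]
    exact huk
  · set K := (k : ℕ) with hK
    set Q := (d+1)^(K-1) with hQ
    have hP : (d+1)^K = (d+1) * Q := by
      conv_lhs => rw [show K = (K-1)+1 by omega]
      rw [pow_succ]; ring
    have hQpos : 0 < Q := pow_pos (by omega) _
    have h1 : (∑ i ∈ Finset.univ.erase k, u i * (d+1)^(i:ℕ)) ≤ c * Q := by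
      calc (∑ i ∈ Finset.univ.erase k, u i * (d+1)^(i:ℕ))
          ≤ ∑ i ∈ Finset.univ.erase k, u i * Q := by
            apply Finset.sum_le_sum
            intro i hi
            rcases Nat.eq_zero_or_pos (u i) with h0 | hpos
            · rw [h0, zero_mul, zero_mul]
            · apply Nat.mul_le_mul_left
              rw [hQ]
              apply Nat.pow_le_pow_right (by omega)
              have hik : i ≠ k := (Finset.mem_erase.1 hi).1
              have hlt : (i : ℕ) < K + 1 :=
                hsupp i (Finsupp.mem_support_iff.2 (Nat.pos_iff_ne_zero.1 hpos))
              have : (i : ℕ) ≠ K := fun hv => hik (Fin.ext hv)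
              omega
        _ = (∑ i ∈ Finset.univ.erase k, u i) * Q := (Finset.sum_mul _ _ _).symm
        _ ≤ c * Q := by
            apply Nat.mul_le_mul_right
            calc (∑ i ∈ Finset.univ.erase k, u i)
                ≤ ∑ i : Fin ℓ, u i :=
                  Finset.sum_le_sum_of_subset (Finset.erase_subset _ _)
              _ = c := husum
    have hc1 : 1 ≤ c := by omega
    have h2 : u k * ((d+1) * Q) ≤ (c-1) * ((d+1) * Q) :=
      Nat.mul_le_mul_right _ (by omega)
    have h3 : c * Q < (d+1) * Q := by
      exact Nat.mul_lt_mul_of_lt_of_le (by omega) (le_refl Q) hQpos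
    have h4 : (c-1) * ((d+1) * Q) + (d+1) * Q = c * ((d+1) * Q) := by
      have : c - 1 + 1 = c := by omega
      calc (c-1) * ((d+1) * Q) + (d+1) * Q = (c - 1 + 1) * ((d+1)*Q) := by ring
        _ = c * ((d+1)*Q) := by rw [this]
    rw [hsplit, hP]
    omega

set_option maxHeartbeats 1000000 in
lemma mono_mem (n ℓ d : ℕ) (hℓ : 1 ≤ ℓ) (hn : ℓ ≤ n) (hd : ℓ * n - ℓ*(ℓ+1)/2 < d) :
    ∀ N, ∀ t : Fin ℓ →₀ ℕ, meas ℓ d t ≤ N → (t.sum fun _ e => e) = d →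
      monomial t (1 : ZMod 2) ∈ Igen n ℓ := by
  intro N
  induction N using Nat.strong_induction_on with
  | _ N ih =>
    intro t hmN ht
    have hD := Dsum n ℓ hn
    have hdn : n ≤ d := by
      have h0 : (0 : ℕ) ∈ Finset.range ℓ := Finset.mem_range.2 (by omega)
      have h00 : n - 1 - 0 ≤ ∑ k ∈ Finset.range ℓ, (n - 1 - k) :=
        Finset.single_le_sum (fun i _ => Nat.zero_le _) h0
      omega
    -- find a position k with t k + k ≥ n
    have hex : ∃ k : Fin ℓ, n ≤ t k + (k : ℕ) := by
      by_contra hcon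
      push_neg at hcon
      have hb : ∀ k : Fin ℓ, t k ≤ n - 1 - (k : ℕ) := by
        intro k; have := hcon k; have := k.isLt; omega
      have hle : d ≤ ∑ k ∈ Finset.range ℓ, (n - 1 - k) := by
        calc d = ∑ i : Fin ℓ, t i := by rw [← sum_eq_sum_univ, ht]
          _ ≤ ∑ i : Fin ℓ, (n - 1 - (i : ℕ)) := Finset.sum_le_sum (fun i _ => hb i)
          _ = ∑ k ∈ Finset.range ℓ, (n - 1 - k) := Fin.sum_univ_eq_sum_range _ _
      omega
    obtain ⟨k, hk⟩ := hex
    set c := n - (k : ℕ) with hc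
    have hkl := k.isLt
    have hc1 : 1 ≤ c := by omega
    have hcd : c ≤ d := by omega
    have htk : c ≤ t k := by omega
    -- decompose t
    set t' := t - Finsupp.single k c with ht'
    have h1 : ∀ i : Fin ℓ, (Finsupp.single k c) i = if i = k then c else 0 := fun i => by
      rw [Finsupp.single_apply]; exact if_congr ⟨Eq.symm, Eq.symm⟩ rfl rfl
    have happ : ∀ i, t' i = if i = k then t i - c else t i := by
      intro i
      rw [ht', Finsupp.tsub_apply, h1]
      by_cases hik : i = k
      · rw [if_pos hik, if_pos hik]
      · rw [if_neg hik, if_neg hik]; omega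
    have hdec : t = t' + Finsupp.single k c := by
      ext i
      rw [Finsupp.add_apply, happ, h1]
      by_cases hik : i = k
      · rw [if_pos hik, if_pos hik]; subst hik; omega
      · rw [if_neg hik, if_neg hik]; omega
    have hsum' : (t'.sum fun _ e => e) + c = d := by
      rw [← ht]
      conv_rhs => rw [hdec]
      rw [Finsupp.sum_add_index' (fun _ => rfl) (fun _ _ _ => rfl),
        Finsupp.sum_single_index rfl]
    -- the relation polynomial
    have hP : G ℓ ((k : ℕ)+1) c ∈ Igen n ℓ :=
      G_mem n ℓ hn (ℓ - ((k:ℕ)+1)) ((k:ℕ)+1) c (by omega) (by omega) (by omega) (by omega)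
    -- support description of G
    have hsupG : ∀ u ∈ (G ℓ ((k:ℕ)+1) c).support,
        (u.sum fun _ e => e) = c ∧ ∀ i ∈ u.support, (i : ℕ) < (k:ℕ) + 1 := by
      intro u hu
      rw [MvPolynomial.mem_support_iff, coeff_G] at hu
      by_contra hcc
      rw [if_neg hcc] at hu
      exact hu rfl
    have hGsum : G ℓ ((k:ℕ)+1) c = ∑ u ∈ (G ℓ ((k:ℕ)+1) c).support, monomial u 1 := by
      conv_lhs => rw [as_sum (G ℓ ((k:ℕ)+1) c)]
      refine Finset.sum_congr rfl fun u hu => ?_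
      congr 1
      have h := coeff_G ℓ ((k:ℕ)+1) c u
      rw [if_pos (hsupG u hu)] at h
      exact h
    have hmem : Finsupp.single k c ∈ (G ℓ ((k:ℕ)+1) c).support := by
      rw [MvPolynomial.mem_support_iff, coeff_G, if_pos]
      · exact one_ne_zero
      constructor
      · rw [Finsupp.sum_single_index rfl]
      · intro i hi
        rw [Finsupp.mem_support_iff, h1] at hi
        by_cases hik : i = k
        · subst hik; omega
        · rw [if_neg hik] at hi; exact absurd rfl hi
    generalize hq : G ℓ ((k:ℕ)+1) c = q at hP hsupG hGsum hmem
    have hsplitG : (monomial (Finsupp.single k c) 1 : MvPolynomial (Fin ℓ) (ZMod 2))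
        = q - ∑ u ∈ q.support.erase (Finsupp.single k c), monomial u 1 := by
      have h5 := Finset.add_sum_erase (q.support) (fun u => (monomial u (1 : ZMod 2))) hmem
      rw [← hGsum] at h5
      nth_rewrite 1 [← h5]
      ring
    -- main rewriting
    have hmono : (monomial t 1 : MvPolynomial (Fin ℓ) (ZMod 2))
        = monomial t' 1 * monomial (Finsupp.single k c) 1 := by
      rw [monomial_mul, one_mul, ← hdec]
    rw [hmono, hsplitG, mul_sub]
    apply Ideal.sub_mem
    · exact Ideal.mul_mem_left _ _ hP
    · rw [Finset.mul_sum]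
      apply Ideal.sum_mem
      intro u hu
      have hu' := Finset.mem_of_mem_erase hu
      have hune : u ≠ Finsupp.single k c := (Finset.mem_erase.1 hu).1
      obtain ⟨husum, husupp⟩ := hsupG u hu'
      -- u k < c
      have hukc : u k < c := by
        have hukle : u k ≤ c := by
          have h5 : u k ≤ ∑ i : Fin ℓ, u i :=
            Finset.single_le_sum (fun i _ => Nat.zero_le _) (Finset.mem_univ k)
          have h6 := sum_eq_sum_univ ℓ u
          omega
        rcases Nat.lt_or_ge (u k) c with h | h
        · exact h
        · exfalso
          apply hune
          have hueq : u k = c := by omega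
          ext i
          rw [h1]
          by_cases hik : i = k
          · rw [if_pos hik, hik, hueq]
          · rw [if_neg hik]
            -- all other entries are 0 since total = c = u k
            have := sum_eq_sum_univ ℓ u
            have hsplit2 : ∑ i : Fin ℓ, u i
                = u k + ∑ j ∈ Finset.univ.erase k, u j := by
              rw [← Finset.add_sum_erase _ _ (Finset.mem_univ k)]
            have hzero : ∑ j ∈ Finset.univ.erase k, u j = 0 := by omega
            have := Finset.sum_eq_zero_iff.1 hzero i
              (Finset.mem_erase.2 ⟨hik, Finset.mem_univ i⟩)
            exact this
      -- measure decreases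
      have hmeasu : meas ℓ d u < c * (d+1)^(k:ℕ) :=
        meas_lt ℓ d c k u husum hukc husupp hcd
      have hmeast : meas ℓ d t = meas ℓ d t' + c * (d+1)^(k:ℕ) := by
        conv_lhs => rw [hdec]
        rw [meas_add, meas_single]
      have hmeastu : meas ℓ d (t' + u) < meas ℓ d t := by
        rw [meas_add, hmeast]
        omega
      rw [monomial_mul, one_mul]
      exact ih (meas ℓ d (t' + u)) (by omega) (t' + u) (le_refl _)
        (by rw [Finsupp.sum_add_index' (fun _ => rfl) (fun _ _ _ => rfl), husum]; omega)


/-- In `𝔽₂[x₁,…,x_ℓ]/(f_{n−ℓ+1},…,f_n)`, every homogeneous element of degree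
strictly greater than `ℓn − ℓ(ℓ+1)/2` is zero. -/
theorem top_degree_vanishing (n ℓ : ℕ) (hℓ : 1 ≤ ℓ) (hn : ℓ ≤ n)
    (d : ℕ) (hd : ℓ * n - ℓ * (ℓ + 1) / 2 < d)
    (p : MvPolynomial (Fin ℓ) (ZMod 2)) (hp : p.IsHomogeneous d) :
    Ideal.Quotient.mk
      (Ideal.span ((fun j => hsymm (Fin ℓ) (ZMod 2) j) '' (Set.Icc (n - ℓ + 1) n)))
      p = 0 := by
  rw [Ideal.Quotient.eq_zero_iff_mem]
  show p ∈ Igen n ℓ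
  nth_rewrite 1 [as_sum p]
  apply Ideal.sum_mem
  intro t htp
  have hco : coeff t p ≠ 0 := MvPolynomial.mem_support_iff.1 htp
  have hdeg : (t.sum fun _ e => e) = d := by
    have h := hp hco
    rw [show (1 : Fin ℓ → ℕ) = fun _ => 1 from rfl, ← Finsupp.degree_eq_weight_one] at h
    exact h
  have hmonoC : (monomial t (coeff t p) : MvPolynomial (Fin ℓ) (ZMod 2))
      = C (coeff t p) * monomial t 1 := by
    rw [C_mul_monomial, mul_one]
  rw [hmonoC]
  exact Ideal.mul_mem_left _ _
    (mono_mem n ℓ d hℓ hn hd (meas ℓ d t) t (le_refl _) hdeg)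
end
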